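/- For every integer $K \geq 2$, the function $f(K) = \frac{\log(K-1)}{(K-1)(\log K - \log(K-1))}$ (with $f(2)=0$ by the convention $\log 1 = 0$) satisfies: $f$ is monotonically increasing on integers $K \geq 2$, and for all integers $n \geq 2$, if $K \leq \sqrt{n}$ then $f(K) \leq n$. -/

import Mathlib

private lemma log_taylor_lb (k : ℝ) (hk : 2 ≤ k) :
    6*k^2*(k-1) + 3*k*(k-1) + 2*(k-1) - 6 ≤ 6*k^3*(k-1) * (Real.log k - Real.log (k-1)) := by
  have hk0 : (0:ℝ) < k := by linarith
  have hk1 : (0:ℝ) < k - 1 := by linarith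
  set x : ℝ := 1/k with hxdef
  have hx0 : 0 < x := by positivity
  have hx1 : |x| < 1 := by
    rw [abs_of_pos hx0, hxdef, div_lt_one hk0]; linarith
  have T := Real.abs_log_sub_add_sum_range_le hx1 3
  simp [Finset.sum_range_succ] at T
  norm_num at T
  rw [abs_of_pos hx0, abs_le] at T
  obtain ⟨_, T2⟩ := T
  have hlog : Real.log (1 - x) = Real.log (k-1) - Real.log k := by
    rw [show (1:ℝ) - x = (k-1)/k by rw [hxdef]; field_simp,
        Real.log_div (by linarith) (by linarith)]
  rw [hlog] at T2
  have hM : (0:ℝ) ≤ 6*k^3*(k-1) := by positivity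
  have h2 := mul_le_mul_of_nonneg_left T2 hM
  have e1 : 6*k^3*(k-1) * (x + x^2/2 + x^3/3 + (Real.log (k-1) - Real.log k))
      = 6*k^2*(k-1) + 3*k*(k-1) + 2*(k-1) - 6*k^3*(k-1) * (Real.log k - Real.log (k-1)) := by
    rw [hxdef]; field_simp; ring
  have e2 : 6*k^3*(k-1) * (x^4/(1-x)) = 6 := by
    rw [hxdef, show (1:ℝ) - 1/k = (k-1)/k by field_simp]
    field_simp
  rw [e1, e2] at h2
  linarith

private lemma log_taylor_ub (k : ℝ) (hk : 2 ≤ k) :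
    6*k*(k+1)^3 * (Real.log (k+1) - Real.log k) ≤ 6*k*(k+1)^2 + 3*k*(k+1) + 2*k + 6 := by
  have hk0 : (0:ℝ) < k := by linarith
  have hk1 : (0:ℝ) < k + 1 := by linarith
  set x : ℝ := 1/(k+1) with hxdef
  have hx0 : 0 < x := by positivity
  have hx1 : |x| < 1 := by
    rw [abs_of_pos hx0, hxdef, div_lt_one hk1]; linarith
  have T := Real.abs_log_sub_add_sum_range_le hx1 3
  simp [Finset.sum_range_succ] at T
  norm_num at T
  rw [abs_of_pos hx0, abs_le] at T
  obtain ⟨T1, _⟩ := T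
  have hlog : Real.log (1 - x) = Real.log k - Real.log (k+1) := by
    rw [show (1:ℝ) - x = k/(k+1) by rw [hxdef]; field_simp; ring,
        Real.log_div (by linarith) (by linarith)]
  rw [hlog] at T1
  have hM : (0:ℝ) ≤ 6*k*(k+1)^3 := by positivity
  have h2 := mul_le_mul_of_nonneg_left T1 hM
  have e1 : 6*k*(k+1)^3 * (x + x^2/2 + x^3/3 + (Real.log k - Real.log (k+1)))
      = 6*k*(k+1)^2 + 3*k*(k+1) + 2*k - 6*k*(k+1)^3 * (Real.log (k+1) - Real.log k) := by
    rw [hxdef]; field_simp; ring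
  have e2 : 6*k*(k+1)^3 * (-(x^4/(1-x))) = -6 := by
    rw [hxdef, show (1:ℝ) - 1/(k+1) = k/(k+1) by field_simp; ring]
    field_simp
  rw [e1, e2] at h2
  linarith

/-- log x ≤ x/2 for x ≥ 1 (indeed for x > 0). -/
private lemma log_le_half (x : ℝ) (hx : 0 < x) : Real.log x ≤ x / 2 := by
  have hs : Real.sqrt x ^ 2 = x := Real.sq_sqrt hx.le
  have hs0 : 0 < Real.sqrt x := Real.sqrt_pos.mpr hx
  have h1 : Real.log x = 2 * Real.log (Real.sqrt x) := by
    rw [Real.log_sqrt hx.le]; ring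
  have h2 : Real.log (Real.sqrt x) ≤ Real.sqrt x - 1 := Real.log_le_sub_one_of_pos hs0
  nlinarith [sq_nonneg (Real.sqrt x - 2)]

/-- log k - log (k-1) ≥ 1/k for k ≥ 2. -/
private lemma log_diff_lb (k : ℝ) (hk : 2 ≤ k) : 1/k ≤ Real.log k - Real.log (k-1) := by
  have hk0 : (0:ℝ) < k := by linarith
  have hk1 : (0:ℝ) < k - 1 := by linarith
  have h := Real.one_sub_inv_le_log_of_pos (show 0 < k/(k-1) by positivity)
  rw [Real.log_div (by linarith) (by linarith)] at h
  have : (k/(k-1))⁻¹ = (k-1)/k := by rw [inv_div]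
  rw [this] at h
  have e : 1 - (k-1)/k = 1/k := by field_simp; ring
  linarith [e ▸ h]

private lemma alg_step (k a b c : ℝ) (hk3 : 3 ≤ k)
    (ha0 : 0 ≤ a) (hba : 1/k ≤ b - a) (ha2 : a ≤ (k-1)/2)
    (H1 : 6*k^2*(k-1) + 3*k*(k-1) + 2*(k-1) - 6 ≤ 6*k^3*(k-1) * (b - a))
    (H2 : 6*k*(k+1)^3 * (c - b) ≤ 6*k*(k+1)^2 + 3*k*(k+1) + 2*k + 6) :
    a * (k*(c-b)) ≤ b * ((k-1)*(b-a)) := by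
  have hk0 : (0:ℝ) < k := by linarith
  have hk1 : (0:ℝ) < k - 1 := by linarith
  have hba0 : 0 < b - a := lt_of_lt_of_le (by positivity) hba
  have hpoly : k^3*(6*k*(k+1)^2 + 3*k*(k+1) + 2*k + 6)
      - (k+1)^3*(6*k^2*(k-1) + 3*k*(k-1) + 2*(k-1) - 6) ≤ 12*k*(k+1)^3 := by
    nlinarith [sq_nonneg k, sq_nonneg (k-1), hk3]
  have e2 := mul_le_mul_of_nonneg_left H2 (show (0:ℝ) ≤ k^3 by positivity)
  have e1 := mul_le_mul_of_nonneg_left H1 (show (0:ℝ) ≤ (k+1)^3 by positivity)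
  have big : 6*k*(k+1)^3 * ((k*(c-b) - (k-1)*(b-a))*k^2) ≤ 6*k*(k+1)^3 * 2 := by
    nlinarith [e1, e2, hpoly]
  have h6 : (0:ℝ) < 6*k*(k+1)^3 := by positivity
  have hvu : k*(c-b) - (k-1)*(b-a) ≤ 2/k^2 := by
    rw [le_div_iff₀ (show (0:ℝ) < k^2 by positivity)]
    exact le_of_mul_le_mul_left big h6
  have key : a * (k*(c-b) - (k-1)*(b-a)) ≤ (b-a) * ((k-1)*(b-a)) := by
    calc a * (k*(c-b) - (k-1)*(b-a)) ≤ a * (2/k^2) :=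
          mul_le_mul_of_nonneg_left hvu ha0
      _ ≤ ((k-1)/2) * (2/k^2) := by
          apply mul_le_mul_of_nonneg_right ha2 (by positivity)
      _ = (1/k) * ((k-1)*(1/k)) := by field_simp
      _ ≤ (b-a) * ((k-1)*(b-a)) := by
          apply mul_le_mul hba (by nlinarith) (by positivity) (by linarith)
  nlinarith [key]

private lemma mono_step (k : ℝ) (hk3 : 3 ≤ k) :
    Real.log (k-1) / ((k-1) * (Real.log k - Real.log (k-1)))
      ≤ Real.log k / (k * (Real.log (k+1) - Real.log k)) := by
  have hk2 : (2:ℝ) ≤ k := by linarith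
  have hk0 : (0:ℝ) < k := by linarith
  have hk1 : (0:ℝ) < k - 1 := by linarith
  have ha0 : 0 ≤ Real.log (k-1) := Real.log_nonneg (by linarith)
  have hba : 1/k ≤ Real.log k - Real.log (k-1) := log_diff_lb k hk2
  have hba0 : 0 < Real.log k - Real.log (k-1) := lt_of_lt_of_le (by positivity) hba
  have hcb : 0 < Real.log (k+1) - Real.log k := by
    have := Real.log_lt_log hk0 (show k < k + 1 by linarith)
    linarith
  have hu_pos : 0 < (k-1) * (Real.log k - Real.log (k-1)) := by positivity
  have hv_pos : 0 < k * (Real.log (k+1) - Real.log k) := by positivity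
  rw [div_le_div_iff₀ hu_pos hv_pos]
  have ha2 : Real.log (k-1) ≤ (k-1)/2 := log_le_half (k-1) hk1
  exact alg_step k (Real.log (k-1)) (Real.log k) (Real.log (k+1)) hk3 ha0 hba ha2
    (log_taylor_lb k hk2) (log_taylor_ub k hk2)

theorem stmt4 (f : ℕ → ℝ)
    (hf : ∀ K : ℕ, f K =
      Real.log ((K : ℝ) - 1) / (((K : ℝ) - 1) * (Real.log K - Real.log ((K : ℝ) - 1)))) :
    (∀ K : ℕ, 2 ≤ K → f K ≤ f (K + 1)) ∧
    (∀ n K : ℕ, 2 ≤ n → 2 ≤ K → (K : ℝ) ≤ Real.sqrt n → f K ≤ n) := by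
  constructor
  · intro K hK
    rw [hf K, hf (K+1)]
    by_cases hK3 : 3 ≤ K
    · have hcast : ((K+1 : ℕ) : ℝ) = (K:ℝ) + 1 := by push_cast; ring
      rw [hcast, show (K:ℝ) + 1 - 1 = (K:ℝ) by ring]
      exact mono_step (K:ℝ) (by exact_mod_cast hK3)
    · have hKeq : K = 2 := by omega
      subst hKeq
      norm_num
      -- goal should now be 0 ≤ Real.log 2 / (2 * (Real.log 3 - Real.log 2)) (roughly)
      have h23 : Real.log 2 < Real.log 3 := Real.log_lt_log (by norm_num) (by norm_num)
      have h2 : 0 ≤ Real.log 2 := Real.log_nonneg (by norm_num)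
      apply div_nonneg h2
      nlinarith [h23]
  · intro n K hn hK hle
    have hk2 : (2:ℝ) ≤ (K:ℝ) := by exact_mod_cast hK
    have hn2 : (2:ℝ) ≤ (n:ℝ) := by exact_mod_cast hn
    rw [hf K]
    have hk0 : (0:ℝ) < (K:ℝ) := by linarith
    have hk1 : (0:ℝ) < (K:ℝ) - 1 := by linarith
    have hba : 1/(K:ℝ) ≤ Real.log (K:ℝ) - Real.log ((K:ℝ)-1) := log_diff_lb _ hk2
    have hba0 : 0 < Real.log (K:ℝ) - Real.log ((K:ℝ)-1) := lt_of_lt_of_le (by positivity) hba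
    have hu_pos : 0 < ((K:ℝ)-1) * (Real.log (K:ℝ) - Real.log ((K:ℝ)-1)) := by positivity
    rw [div_le_iff₀ hu_pos]
    have ha : Real.log ((K:ℝ)-1) ≤ ((n:ℝ) - 1)/2 := by
      have h1 : Real.log ((K:ℝ)-1) ≤ Real.log (Real.sqrt n) := by
        apply Real.log_le_log hk1
        linarith [hle]
      have h2 : Real.log (Real.sqrt n) = Real.log n / 2 := Real.log_sqrt (by positivity)
      have h3 : Real.log (n:ℝ) ≤ (n:ℝ) - 1 := Real.log_le_sub_one_of_pos (by linarith)
      rw [h2] at h1; linarith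
    have hu : 1/2 ≤ ((K:ℝ)-1) * (Real.log (K:ℝ) - Real.log ((K:ℝ)-1)) := by
      have h1 : ((K:ℝ)-1) * (1/(K:ℝ)) ≤ ((K:ℝ)-1) * (Real.log (K:ℝ) - Real.log ((K:ℝ)-1)) :=
        mul_le_mul_of_nonneg_left hba (by linarith)
      have h2 : (1:ℝ)/2 ≤ ((K:ℝ)-1)*(1/(K:ℝ)) := by
        rw [mul_one_div, le_div_iff₀ hk0]; linarith
      linarith
    have hmul : (n:ℝ) * (1/2) ≤ (n:ℝ) * (((K:ℝ)-1) * (Real.log (K:ℝ) - Real.log ((K:ℝ)-1))) :=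
      mul_le_mul_of_nonneg_left hu (by linarith)
    linarith
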